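/- The matrix B = sI - A(s; t_1,...,t_r), with t_1,...,t_r positive reals, has exactly two eigenvalues, μ and -μ with μ = sqrt(t_1 + ... + t_r), each with algebraic (and geometric) multiplicity 2^{r-1}. -/

import Mathlib

/-- The matrix `A(s; t_1,...,t_r)` of the paper: rows and columns are indexed by
binary sequences `l : Fin r → Bool`.  Diagonal entries are `s`; if `l'` differs
from `l` exactly at position `i`, the entry is `-(-1)^{l_{i+1}+⋯+l_r} t_i` when
`l_i = 0` and `(-1)^{l_i+⋯+l_r} (= -(-1)^{l_{i+1}+⋯+l_r})` when `l_i = 1`;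
all other entries vanish. -/
def Amat (r : ℕ) {R : Type*} [CommRing R] (s : R) (t : Fin r → R) :
    Matrix (Fin r → Bool) (Fin r → Bool) R :=
  fun l l' =>
    (if l' = l then s else 0) +
      ∑ i : Fin r,
        if l' = Function.update l i (!(l i)) then
          -(-1 : R) ^ ((Finset.univ.filter fun j => i < j ∧ l j = true).card) *
            (if l i then 1 else t i)
        else 0


/-- The matrix `B` with zero diagonal satisfying `A(s;t) = s·I - B`. -/
def Bmat (r : ℕ) {R : Type*} [CommRing R] (t : Fin r → R) :
    Matrix (Fin r → Bool) (Fin r → Bool) R :=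
  -(Amat r 0 t)

namespace BmatAux

variable {r : ℕ}

/-- flip the i-th coordinate -/
def flip (l : Fin r → Bool) (i : Fin r) : Fin r → Bool := Function.update l i (!(l i))

lemma flip_apply_self (l : Fin r → Bool) (i : Fin r) : flip l i i = !(l i) := by
  simp [flip]

lemma flip_apply_ne (l : Fin r → Bool) {i j : Fin r} (h : j ≠ i) : flip l i j = l j := by
  simp [flip, Function.update_of_ne h]

lemma flip_ne (l : Fin r → Bool) (i : Fin r) : flip l i ≠ l := by
  intro h
  have := congrFun h i
  rw [flip_apply_self] at this
  cases l i <;> simp_all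

lemma flip_flip_self (l : Fin r → Bool) (i : Fin r) : flip (flip l i) i = l := by
  funext j
  rcases eq_or_ne j i with rfl | h
  · rw [flip_apply_self, flip_apply_self, Bool.not_not]
  · rw [flip_apply_ne _ h, flip_apply_ne _ h]

lemma flip_inj {l : Fin r → Bool} {i j : Fin r} (h : flip l i = flip l j) : i = j := by
  by_contra hne
  have := congrFun h i
  rw [flip_apply_self, flip_apply_ne _ hne] at this
  cases l i <;> simp_all

lemma flip_comm (l : Fin r → Bool) {i j : Fin r} (h : i ≠ j) :
    flip (flip l i) j = flip (flip l j) i := by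
  funext k
  rcases eq_or_ne k i with rfl | hki
  · rw [flip_apply_ne _ h, flip_apply_self, flip_apply_self, flip_apply_ne _ h]
  · rcases eq_or_ne k j with rfl | hkj
    · rw [flip_apply_self, flip_apply_ne _ (Ne.symm h), flip_apply_ne _ hki, flip_apply_self]
    · rw [flip_apply_ne _ hkj, flip_apply_ne _ hki, flip_apply_ne _ hki, flip_apply_ne _ hkj]

/-- sign attached to position i -/
def sgn (i : Fin r) (l : Fin r → Bool) : ℝ := ∏ k, if i < k ∧ l k then (-1 : ℝ) else 1

lemma neg_one_pow_eq_sgn (i : Fin r) (l : Fin r → Bool) :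
    (-1 : ℝ) ^ ((Finset.univ.filter fun j => i < j ∧ l j = true).card) = sgn i l := by
  rw [sgn, Finset.prod_ite, Finset.prod_const, Finset.prod_const, one_pow, mul_one]

lemma sgn_flip_of_not_lt {i j : Fin r} (h : ¬ i < j) (l : Fin r → Bool) :
    sgn i (flip l j) = sgn i l := by
  unfold sgn
  apply Finset.prod_congr rfl
  intro k _
  rcases eq_or_ne k j with rfl | hk
  · simp [h]
  · rw [flip_apply_ne _ hk]

lemma sgn_flip_of_lt {i j : Fin r} (h : i < j) (l : Fin r → Bool) :
    sgn i (flip l j) = -sgn i l := by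
  unfold sgn
  have key : (fun k => if i < k ∧ flip l j k then (-1 : ℝ) else 1) =
      Function.update (fun k => if i < k ∧ l k then (-1 : ℝ) else 1) j
        (if !(l j) then (-1 : ℝ) else 1) := by
    funext k
    rcases eq_or_ne k j with rfl | hk
    · simp [flip_apply_self, h]
    · rw [Function.update_of_ne hk, flip_apply_ne _ hk]
  rw [key, Finset.prod_update_of_mem (Finset.mem_univ j)]
  rw [← Finset.mul_prod_erase Finset.univ _ (Finset.mem_univ j)]
  rw [Finset.sdiff_singleton_eq_erase]
  have : (if !(l j) then (-1 : ℝ) else 1) = -(if i < j ∧ l j then (-1 : ℝ) else 1) := by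
    cases l j <;> simp [h]
  rw [this, neg_mul]

/-- the entry value -/
def ent (t : Fin r → ℝ) (i : Fin r) (l : Fin r → Bool) : ℝ :=
  sgn i l * (if l i then 1 else t i)

lemma Bmat_apply (t : Fin r → ℝ) (l l' : Fin r → Bool) :
    Bmat r t l l' = ∑ i, if l' = flip l i then ent t i l else 0 := by
  unfold Bmat Amat ent flip
  simp only [Matrix.neg_apply, Pi.neg_apply, if_pos, ite_self, zero_add, ← Finset.sum_neg_distrib]
  change -(∑ i : Fin r, _) = _
  rw [← Finset.sum_neg_distrib]
  apply Finset.sum_congr rfl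
  intro i _
  rw [neg_one_pow_eq_sgn]
  split_ifs <;> ring

lemma key_sign (t : Fin r → ℝ) {i j : Fin r} (h : i < j) (l : Fin r → Bool) :
    ent t i l * ent t j (flip l i) = -(ent t j l * ent t i (flip l j)) := by
  unfold ent
  rw [flip_apply_ne l (Ne.symm (ne_of_lt h)), flip_apply_ne l (ne_of_lt h)]
  rw [sgn_flip_of_not_lt (by exact fun hc => absurd (lt_trans h hc) (lt_irrefl i)) l]
  rw [sgn_flip_of_lt h l]
  ring

lemma ent_mul_flip (t : Fin r → ℝ) (i : Fin r) (l : Fin r → Bool) :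
    ent t i l * ent t i (flip l i) = t i := by
  unfold ent
  rw [sgn_flip_of_not_lt (lt_irrefl i) l, flip_apply_self]
  have hs : sgn i l * sgn i l = 1 := by
    unfold sgn
    rw [← Finset.prod_mul_distrib]
    apply Finset.prod_eq_one
    intro k _
    split_ifs <;> norm_num
  cases hli : l i <;> simp [hli] <;> linear_combination t i * hs

/-- The key identity: B² = (∑ tᵢ) · I -/
lemma B_sq (t : Fin r → ℝ) :
    Bmat r t * Bmat r t = (∑ i, t i) • (1 : Matrix (Fin r → Bool) (Fin r → Bool) ℝ) := by
  ext l l''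
  rw [Matrix.mul_apply]
  have step1 : ∀ l', Bmat r t l l' * Bmat r t l' l''
      = ∑ i, if l' = flip l i then ent t i l * Bmat r t l' l'' else 0 := by
    intro l'
    rw [Bmat_apply, Finset.sum_mul]
    apply Finset.sum_congr rfl
    intro i _
    rw [ite_mul, zero_mul]
  simp_rw [step1]
  rw [Finset.sum_comm]
  have step2 : ∀ i : Fin r, (∑ l', if l' = flip l i then ent t i l * Bmat r t l' l'' else 0)
      = ∑ j, if l'' = flip (flip l i) j then ent t i l * ent t j (flip l i) else 0 := by
    intro i
    rw [Finset.sum_ite_eq' Finset.univ (flip l i)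
      (fun l' => ent t i l * Bmat r t l' l''), if_pos (Finset.mem_univ _)]
    rw [Bmat_apply, Finset.mul_sum]
    apply Finset.sum_congr rfl
    intro j _
    rw [mul_ite, mul_zero]
  simp_rw [step2]
  rcases eq_or_ne l'' l with rfl | hne
  · have diag : ∀ i : Fin r,
        (∑ j, if l'' = flip (flip l'' i) j then ent t i l'' * ent t j (flip l'' i) else 0) = t i := by
      intro i
      have hcond : ∀ j : Fin r, (l'' = flip (flip l'' i) j) ↔ j = i := by
        intro j
        constructor
        · intro hj
          exact (flip_inj ((flip_flip_self l'' i).trans hj)).symm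
        · rintro rfl; rw [flip_flip_self]
      simp_rw [hcond]
      rw [Finset.sum_ite_eq' Finset.univ i
        (fun j => ent t i l'' * ent t j (flip l'' i)), if_pos (Finset.mem_univ _)]
      exact ent_mul_flip t i l''
    simp_rw [diag]
    simp [Matrix.one_apply]
  · have F := fun (i j : Fin r) =>
      if l'' = flip (flip l i) j then ent t i l * ent t j (flip l i) else 0
    have antisym : ∀ i j : Fin r,
        (if l'' = flip (flip l j) i then ent t j l * ent t i (flip l j) else 0)
        = -(if l'' = flip (flip l i) j then ent t i l * ent t j (flip l i) else 0) := by
      intro i j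
      rcases eq_or_ne i j with rfl | hij
      · rw [flip_flip_self]
        rw [if_neg hne, neg_zero]
      · rw [flip_comm l (Ne.symm hij)]
        split_ifs with hcond
        · rcases lt_or_gt_of_ne hij with hlt | hgt
          · rw [key_sign t hlt l, neg_neg]
          · rw [key_sign t hgt l]
        · rw [neg_zero]
    have hS : (∑ i : Fin r, ∑ j : Fin r,
        if l'' = flip (flip l i) j then ent t i l * ent t j (flip l i) else 0)
        = -(∑ i : Fin r, ∑ j : Fin r,
          if l'' = flip (flip l i) j then ent t i l * ent t j (flip l i) else 0) := by
      conv_lhs => rw [Finset.sum_comm]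
      rw [← Finset.sum_neg_distrib]
      apply Finset.sum_congr rfl
      intro i _
      rw [← Finset.sum_neg_distrib]
      apply Finset.sum_congr rfl
      intro j _
      exact antisym i j
    have : (∑ i : Fin r, ∑ j : Fin r,
        if l'' = flip (flip l i) j then ent t i l * ent t j (flip l i) else 0) = 0 := by
      linarith [hS]
    rw [this]
    simp [Matrix.one_apply, Ne.symm hne]

/-- diagonal sign vector -/
def dvec (l : Fin r → Bool) : ℝ := ∏ k, if l k then (-1 : ℝ) else 1

lemma dvec_mul_self (l : Fin r → Bool) : dvec l * dvec l = 1 := by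
  unfold dvec
  rw [← Finset.prod_mul_distrib]
  apply Finset.prod_eq_one
  intro k _
  split_ifs <;> norm_num

lemma dvec_mul_flip (l : Fin r → Bool) (i : Fin r) : dvec l * dvec (flip l i) = -1 := by
  unfold dvec
  rw [← Finset.prod_mul_distrib]
  rw [Finset.prod_eq_single i
    (fun k _ hk => by rw [flip_apply_ne _ hk]; split_ifs <;> norm_num)
    (fun h => absurd (Finset.mem_univ i) h)]
  rw [flip_apply_self]
  cases l i <;> norm_num

/-- diagonal sign matrix -/
noncomputable def dmat (r : ℕ) : Matrix (Fin r → Bool) (Fin r → Bool) ℝ :=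
  Matrix.diagonal dvec

lemma dmat_mul_dmat : dmat r * dmat r = 1 := by
  rw [dmat, Matrix.diagonal_mul_diagonal]
  simp_rw [dvec_mul_self]
  exact Matrix.diagonal_one

lemma dmat_conj (t : Fin r → ℝ) : dmat r * Bmat r t * dmat r = -(Bmat r t) := by
  ext l l'
  rw [dmat, Matrix.mul_diagonal, Matrix.diagonal_mul, Matrix.neg_apply, Bmat_apply,
    Finset.mul_sum, Finset.sum_mul, ← Finset.sum_neg_distrib]
  apply Finset.sum_congr rfl
  intro i _
  split_ifs with h
  · subst h
    linear_combination (ent t i l) * dvec_mul_flip l i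
  · ring

lemma rank_neg {n : Type*} [Fintype n] [DecidableEq n] (M : Matrix n n ℝ) :
    (-M).rank = M.rank := by
  have h1 : (-M).mulVecLin = -(M.mulVecLin) := by
    ext v
    simp [Matrix.mulVecLin_apply, Matrix.neg_mulVec]
  have h2 : LinearMap.range (-M).mulVecLin = LinearMap.range M.mulVecLin := by
    rw [h1, LinearMap.range_neg]
  unfold Matrix.rank
  rw [h2]

lemma rank_sub_le {n : Type*} [Fintype n] [DecidableEq n] (A B : Matrix n n ℝ) :
    (A - B).rank ≤ A.rank + B.rank := by
  unfold Matrix.rank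
  have h1 : (A - B).mulVecLin = A.mulVecLin - B.mulVecLin := by
    ext v
    simp [Matrix.mulVecLin_apply, Matrix.sub_mulVec]
  have h2 : LinearMap.range (A - B).mulVecLin ≤
      LinearMap.range A.mulVecLin ⊔ LinearMap.range B.mulVecLin := by
    rintro x ⟨v, rfl⟩
    rw [h1]
    exact Submodule.sub_mem _ (Submodule.mem_sup_left ⟨v, rfl⟩)
      (Submodule.mem_sup_right ⟨v, rfl⟩)
  exact (Submodule.finrank_mono h2).trans
    (Submodule.finrank_add_le_finrank_add_finrank _ _)

end BmatAux


open Polynomial in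
theorem Bmat_eigenvalues (r : ℕ) (hr : 1 < r) (t : Fin r → ℝ) (ht : ∀ i, 0 < t i) :
    (Bmat r t).charpoly =
        (X - C (Real.sqrt (∑ i, t i))) ^ 2 ^ (r - 1) *
          (X + C (Real.sqrt (∑ i, t i))) ^ 2 ^ (r - 1) ∧
    (Bmat r t - Real.sqrt (∑ i, t i) •
        (1 : Matrix (Fin r → Bool) (Fin r → Bool) ℝ)).rank = 2 ^ (r - 1) ∧
    (Bmat r t + Real.sqrt (∑ i, t i) •
        (1 : Matrix (Fin r → Bool) (Fin r → Bool) ℝ)).rank = 2 ^ (r - 1) := by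
  classical
  have hne : Nonempty (Fin r) := ⟨⟨0, by omega⟩⟩
  set μ := Real.sqrt (∑ i, t i) with hμdef
  have hcpos : 0 < ∑ i, t i := Finset.sum_pos (fun i _ => ht i) ⟨hne.some, Finset.mem_univ _⟩
  have hμsq : μ ^ 2 = ∑ i, t i := Real.sq_sqrt hcpos.le
  have hμpos : 0 < μ := Real.sqrt_pos.mpr hcpos
  have hcard : Fintype.card (Fin r → Bool) = 2 ^ r := by
    simp [Fintype.card_fun]
  have hpow : 2 ^ r = 2 ^ (r - 1) + 2 ^ (r - 1) := by
    obtain ⟨k, rfl⟩ : ∃ k, r = k + 1 := ⟨r - 1, by omega⟩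
    simp only [Nat.add_sub_cancel, pow_succ]
    omega
  set B := Bmat r t with hB
  set D := BmatAux.dmat r with hD
  set Mm := B - μ • (1 : Matrix (Fin r → Bool) (Fin r → Bool) ℝ) with hMm
  set Mp := B + μ • (1 : Matrix (Fin r → Bool) (Fin r → Bool) ℝ) with hMp
  have hmul0 : Mm * Mp = 0 := by
    have h : Mm * Mp = B * B - (μ ^ 2) • 1 := by
      simp only [hMm, hMp, sub_mul, mul_add, Matrix.smul_mul, Matrix.mul_smul,
        Matrix.one_mul, Matrix.mul_one, smul_smul]
      rw [show μ * μ = μ ^ 2 from (sq μ).symm]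
      abel
    rw [h, hB, BmatAux.B_sq, hμsq, sub_self]
  have hle : Mm.rank + Mp.rank ≤ 2 ^ r := by
    have h := Matrix.rank_add_rank_le_card_of_mul_eq_zero hmul0
    rwa [hcard] at h
  have hsub : Mp - Mm = (2 * μ) • 1 := by
    rw [hMp, hMm]
    ext l l'
    simp only [Matrix.sub_apply, Matrix.add_apply, Matrix.smul_apply, smul_eq_mul]
    ring
  have hrankid : ((2 * μ) • (1 : Matrix (Fin r → Bool) (Fin r → Bool) ℝ)).rank = 2 ^ r := by
    rw [Matrix.rank_of_isUnit, hcard]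
    rw [Matrix.isUnit_iff_isUnit_det, Matrix.det_smul, Matrix.det_one, mul_one]
    exact isUnit_iff_ne_zero.mpr (pow_ne_zero _ (by positivity))
  have hge : 2 ^ r ≤ Mp.rank + Mm.rank := by
    calc 2 ^ r = ((2 * μ) • (1 : Matrix (Fin r → Bool) (Fin r → Bool) ℝ)).rank := hrankid.symm
    _ = (Mp - Mm).rank := by rw [hsub]
    _ ≤ Mp.rank + Mm.rank := BmatAux.rank_sub_le _ _
  have hDdet : IsUnit (D.det) := by
    apply IsUnit.of_mul_eq_one D.det
    rw [← Matrix.det_mul, hD, BmatAux.dmat_mul_dmat, Matrix.det_one]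
  have hconj : D * Mm * D = -Mp := by
    rw [hMm, hMp, Matrix.mul_sub, Matrix.sub_mul, Matrix.mul_smul, Matrix.smul_mul,
      Matrix.mul_one, hD, hB, BmatAux.dmat_conj, BmatAux.dmat_mul_dmat]
    abel
  have hrankeq : Mm.rank = Mp.rank := by
    have h1 : (D * Mm * D).rank = Mm.rank := by
      rw [Matrix.rank_mul_eq_left_of_isUnit_det D (D * Mm) hDdet,
        Matrix.rank_mul_eq_right_of_isUnit_det D Mm hDdet]
    rw [hconj, BmatAux.rank_neg] at h1
    exact h1.symm
  have hMmrank : Mm.rank = 2 ^ (r - 1) := by omega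
  have hMprank : Mp.rank = 2 ^ (r - 1) := by omega
  refine ⟨?_, hMmrank, hMprank⟩
  -- charpoly part
  have hchm : ∀ M : Matrix (Fin r → Bool) (Fin r → Bool) ℝ,
      Matrix.charmatrix M = (X : ℝ[X]) • 1 - M.map C := by
    intro M
    rw [Matrix.charmatrix]
    congr 1
    rw [Matrix.smul_one_eq_diagonal]
    rfl
  have hmapone : ∀ c : ℝ, (c • (1 : Matrix (Fin r → Bool) (Fin r → Bool) ℝ)).map C
      = (C c) • (1 : Matrix (Fin r → Bool) (Fin r → Bool) ℝ[X]) := by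
    intro c
    ext l l'
    simp [Matrix.map_apply, Matrix.one_apply, apply_ite]
  have hmapneg : ∀ M : Matrix (Fin r → Bool) (Fin r → Bool) ℝ,
      (-M).map C = -(M.map C) := by
    intro M
    ext l l'
    simp [Matrix.map_apply]
  have hBc : B.map C * B.map C = (C (μ ^ 2)) • 1 := by
    rw [← Matrix.map_mul, hB, BmatAux.B_sq, ← hμsq, hmapone]
  have hprod : Matrix.charmatrix B * Matrix.charmatrix (-B) =
      ((X : ℝ[X]) ^ 2 - C (μ ^ 2)) • 1 := by
    rw [hchm, hchm, hmapneg, sub_neg_eq_add]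
    simp only [sub_mul, mul_add, Matrix.smul_mul, Matrix.mul_smul, Matrix.one_mul,
      Matrix.mul_one, smul_smul]
    rw [hBc, show (X : ℝ[X]) * X = X ^ 2 from (sq X).symm, sub_smul]
    abel
  have hDc2 : (D.map C) * (D.map C) = 1 := by
    rw [← Matrix.map_mul, hD, BmatAux.dmat_mul_dmat]
    ext l l'
    simp [Matrix.map_apply, Matrix.one_apply, apply_ite]
  have hDBD : (D.map C) * (B.map C) * (D.map C) = -(B.map C) := by
    rw [← Matrix.map_mul, ← Matrix.map_mul, hD, hB, BmatAux.dmat_conj, hmapneg]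
  have hcm : Matrix.charmatrix (-B) = (D.map C) * Matrix.charmatrix B * (D.map C) := by
    rw [hchm, hchm, hmapneg, Matrix.mul_sub, Matrix.sub_mul, Matrix.mul_smul, Matrix.smul_mul,
      Matrix.mul_one, hDc2, hDBD, sub_neg_eq_add]
  have hcharneg : (-B).charpoly = B.charpoly := by
    rw [Matrix.charpoly, Matrix.charpoly, hcm, Matrix.det_mul, Matrix.det_mul]
    have h : (D.map C).det * (D.map C).det = 1 := by
      rw [← Matrix.det_mul, hDc2, Matrix.det_one]
    calc (D.map C).det * (Matrix.charmatrix B).det * (D.map C).det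
        = (Matrix.charmatrix B).det * ((D.map C).det * (D.map C).det) := by ring
      _ = (Matrix.charmatrix B).det := by rw [h, mul_one]
  have hsq : B.charpoly ^ 2 = ((X - C μ) * (X + C μ)) ^ 2 ^ r := by
    have h : B.charpoly * (-B).charpoly = ((X - C μ) * (X + C μ)) ^ 2 ^ r := by
      rw [Matrix.charpoly, Matrix.charpoly, ← Matrix.det_mul, hprod, Matrix.det_smul,
        Matrix.det_one, mul_one, hcard]
      congr 1
      rw [map_pow]
      ring
    rw [hcharneg] at h
    rw [sq]
    exact h
  set Q := (X - C μ) ^ 2 ^ (r - 1) * (X + C μ) ^ 2 ^ (r - 1) with hQ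
  have hQ2 : Q ^ 2 = ((X - C μ) * (X + C μ)) ^ 2 ^ r := by
    rw [hQ, mul_pow, ← pow_mul, ← pow_mul, ← mul_pow, ← pow_succ]
    congr 2
    omega
  have hPQ : B.charpoly ^ 2 = Q ^ 2 := by rw [hsq, hQ2]
  have hfac : (B.charpoly - Q) * (B.charpoly + Q) = 0 := by linear_combination hPQ
  rcases mul_eq_zero.mp hfac with h | h
  · exact sub_eq_zero.mp h
  · exfalso
    have hP : B.charpoly.Monic := B.charpoly_monic
    have hQm : Q.Monic := ((monic_X_sub_C μ).pow _).mul ((monic_X_add_C μ).pow _)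
    have heq : B.charpoly = -Q := eq_neg_of_add_eq_zero_left h
    have hl := congrArg Polynomial.leadingCoeff heq
    rw [hP.leadingCoeff, Polynomial.leadingCoeff_neg, hQm.leadingCoeff] at hl
    norm_num at hl
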